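/- Let δ, γ ∈ (−1, +∞) satisfy M(δ,γ) < 1, and let Φ : [0,∞) → ℝ be the unique bounded real-analytic solution of problem (P) with 0 ≤ Φ ≤ 1. Then Φ is increasing on [0,∞). -/

import Mathlib

open Real Filter Set

/-- The constant `M(δ,γ)` from the paper. -/
noncomputable def Mconst (δ γ : ℝ) : ℝ :=
  ((max 1 (1+δ)) ^ ((3:ℝ)/2) * (max 1 (1+γ)) ^ ((1:ℝ)/2) /
    ((min 1 (1+δ)) ^ ((5:ℝ)/2) * (min 1 (1+γ)) ^ ((1:ℝ)/2))) *
  (2*|δ| + |δ-γ| * (max 1 (1+δ)) / ((min 1 (1+δ)) * (min 1 (1+γ))))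

/-- `y` solves problem (P): `((1+δy)y')' + 2x(1+γy)y' = 0` on `(0,∞)`,
`y(0) = 0` and `y(x) → 1` as `x → ∞`. -/
def SolvesP (δ γ : ℝ) (y : ℝ → ℝ) : Prop :=
  (∀ x ∈ Set.Ioi (0:ℝ), DifferentiableAt ℝ y x) ∧
  (∀ x ∈ Set.Ioi (0:ℝ),
    HasDerivAt (fun t => (1 + δ * y t) * deriv y t)
      (-(2 * x * (1 + γ * y x) * deriv y x)) x) ∧
  y 0 = 0 ∧ Tendsto y atTop (nhds 1)

/-- `y` is a bounded real-analytic function on `[0,∞)`. -/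
def BddAnalytic (y : ℝ → ℝ) : Prop :=
  AnalyticOn ℝ y (Set.Ici 0) ∧ ∃ C : ℝ, ∀ x ≥ (0:ℝ), |y x| ≤ C

theorem modified_error_function_increasing
    (δ γ : ℝ) (hδ : -1 < δ) (hγ : -1 < γ) (hM : Mconst δ γ < 1)
    (Φ : ℝ → ℝ) (hΦa : BddAnalytic Φ) (hΦs : SolvesP δ γ Φ)
    (hΦb : ∀ x ≥ (0:ℝ), 0 ≤ Φ x ∧ Φ x ≤ 1) :
    StrictMonoOn Φ (Set.Ici 0) := by
  obtain ⟨hdiff, hode, h0, hlim⟩ := hΦs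
  have hcontIci : ContinuousOn Φ (Set.Ici 0) := hΦa.1.continuousOn
  -- positivity of 1 + δ Φ on [0,∞)
  have hden : ∀ x ≥ (0:ℝ), 0 < 1 + δ * Φ x := by
    intro x hx
    obtain ⟨h1, h2⟩ := hΦb x hx
    nlinarith [mul_nonneg (by linarith : (0:ℝ) ≤ δ + 1) h1]
  set w : ℝ → ℝ := fun t => (1 + δ * Φ t) * deriv Φ t with hw
  set c : ℝ → ℝ := fun t => 2 * t * (1 + γ * Φ t) / (1 + δ * Φ t) with hc
  have hcCont : ContinuousOn c (Set.Ici 0) := by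
    apply ContinuousOn.div
    · exact (continuousOn_const.mul continuousOn_id).mul
        (continuousOn_const.add (continuousOn_const.mul hcontIci))
    · exact continuousOn_const.add (continuousOn_const.mul hcontIci)
    · intro x hx; exact (hden x hx).ne'
  have hcContIoi : ContinuousOn c (Set.Ioi 0) :=
    hcCont.mono (Set.Ioi_subset_Ici le_rfl)
  set F : ℝ → ℝ := fun x => ∫ t in (0:ℝ)..x, c t with hF
  have hFderiv : ∀ x ∈ Set.Ioi (0:ℝ), HasDerivAt F (c x) x := by
    intro x hx
    apply intervalIntegral.integral_hasDerivAt_right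
    · apply ContinuousOn.intervalIntegrable
      apply hcCont.mono
      rw [Set.uIcc_of_le (le_of_lt hx)]
      exact Set.Icc_subset_Ici_self
    · exact hcContIoi.stronglyMeasurableAtFilter isOpen_Ioi x hx
    · exact hcContIoi.continuousAt (isOpen_Ioi.mem_nhds hx)
  set g : ℝ → ℝ := fun x => w x * Real.exp (F x) with hg
  have hgderiv : ∀ x ∈ Set.Ioi (0:ℝ), HasDerivAt g 0 x := by
    intro x hx
    have hwx := hode x hx
    have hFx := hFderiv x hx
    have hgx := hwx.mul (hFx.exp)
    have key : -(2 * x * (1 + γ * Φ x) * deriv Φ x) * Real.exp (F x) +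
        w x * (Real.exp (F x) * c x) = 0 := by
      have h1 : w x * c x = 2 * x * (1 + γ * Φ x) * deriv Φ x := by
        simp only [hw, hc]
        field_simp [(hden x (le_of_lt hx)).ne']
      have h2 : w x * (Real.exp (F x) * c x)
          = 2 * x * (1 + γ * Φ x) * deriv Φ x * Real.exp (F x) := by
        rw [mul_comm (Real.exp (F x)) (c x), ← mul_assoc, h1]
      linarith
    rw [show (0:ℝ) = -(2 * x * (1 + γ * Φ x) * deriv Φ x) * Real.exp (F x) +
        w x * (Real.exp (F x) * c x) from key.symm]
    exact hgx
  -- g is constant on (0,∞)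
  have hgconst : ∀ a ∈ Set.Ioi (0:ℝ), ∀ b ∈ Set.Ioi (0:ℝ), a ≤ b → g b = g a := by
    intro a ha b hb hab
    have hsub : Set.Icc a b ⊆ Set.Ioi (0:ℝ) := fun t ht => lt_of_lt_of_le ha ht.1
    have hcont : ContinuousOn g (Set.Icc a b) := fun t ht =>
      ((hgderiv t (hsub ht)).continuousAt).continuousWithinAt
    exact constant_of_has_deriv_right_zero hcont
      (fun t ht => ((hgderiv t (hsub (Set.Ico_subset_Icc_self ht))).hasDerivWithinAt))
      b ⟨hab, le_rfl⟩
  -- w has the same sign as g 1 everywhere on (0,∞)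
  have hsign : ∀ x ∈ Set.Ioi (0:ℝ), w x * Real.exp (F x) = g 1 := by
    intro x hx
    rcases le_total x 1 with h | h
    · exact (hgconst x hx 1 (by norm_num) h).symm
    · exact hgconst 1 (by norm_num) x hx h
  -- show g 1 > 0
  have hg1pos : 0 < g 1 := by
    by_contra hneg
    push_neg at hneg
    have hwle : ∀ x ∈ Set.Ioi (0:ℝ), deriv Φ x ≤ 0 := by
      intro x hx
      have := hsign x hx
      have hwx : w x ≤ 0 := by
        nlinarith [Real.exp_pos (F x), this]
      have hwx' : (1 + δ * Φ x) * deriv Φ x ≤ 0 := hwx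
      have hd := hden x (le_of_lt hx)
      nlinarith [hwx', hd]
    have hanti : AntitoneOn Φ (Set.Ici 0) := by
      apply antitoneOn_of_deriv_nonpos (convex_Ici 0) hcontIci
      · intro x hx
        rw [interior_Ici] at hx
        exact (hdiff x hx).differentiableWithinAt
      · intro x hx
        rw [interior_Ici] at hx
        exact hwle x hx
    have hle0 : ∀ x ≥ (0:ℝ), Φ x ≤ 0 := by
      intro x hx
      have := hanti (Set.self_mem_Ici) hx hx
      rwa [h0] at this
    have : (1:ℝ) ≤ 0 := by
      apply le_of_tendsto hlim
      filter_upwards [eventually_ge_atTop (0:ℝ)] with x hx using hle0 x hx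
    linarith
  -- deriv Φ > 0 on (0,∞)
  have hderivpos : ∀ x ∈ Set.Ioi (0:ℝ), 0 < deriv Φ x := by
    intro x hx
    have hs := hsign x hx
    have hwpos : 0 < w x := by
      nlinarith [Real.exp_pos (F x)]
    have hwpos' : 0 < (1 + δ * Φ x) * deriv Φ x := hwpos
    have hd := hden x (le_of_lt hx)
    nlinarith [hwpos', hd]
  apply strictMonoOn_of_deriv_pos (convex_Ici 0) hcontIci
  intro x hx
  rw [interior_Ici] at hx
  exact hderivpos x hx
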